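/- For any constant c > e/√2, there is some n0 such that for all n ≥ n0 the following holds: if T1 and T2 are two rooted binary trees on the same label set of size n, chosen uniformly and independently at random, then the expectation E[d_LR(T1, T2)] ≥ n − c√n. -/

import Mathlib

/-!
Common framework: rooted binary trees with leaves bijectively labeled by a
finite label set, leaf removal, restriction, the leaf-removal distance `d_LR`,
compatibility, leaf-disagreements, triplets, LPR moves, etc.
-/

universe u

/-- A rooted binary tree whose leaves carry labels from `α`. -/
inductive LTree (α : Type u) : Type u where
  | leaf : α → LTree α
  | node : LTree α → LTree α → LTree α

namespace LTree

variable {α : Type u} [DecidableEq α]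

/-- The set of leaf labels of a tree. -/
def labels : LTree α → Finset α
  | leaf a => {a}
  | node l r => labels l ∪ labels r

/-- A tree is `Good` when its leaves carry pairwise distinct labels
(i.e. the leaves are bijectively labeled). -/
def Good : LTree α → Prop
  | leaf _ => True
  | node l r => Good l ∧ Good r ∧ Disjoint (labels l) (labels r)

/-- `T` is a (rooted binary, uniquely leaf-labeled) tree on label set `𝒳`. -/
def IsTreeOn (T : LTree α) (𝒳 : Finset α) : Prop :=
  Good T ∧ labels T = 𝒳

/-- Equality of rooted trees: children of a node are unordered. -/
inductive Iso : LTree α → LTree α → Prop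
  | leaf (a : α) : Iso (leaf a) (leaf a)
  | node {l₁ r₁ l₂ r₂ : LTree α} :
      Iso l₁ l₂ → Iso r₁ r₂ → Iso (node l₁ r₁) (node l₂ r₂)
  | swap {l₁ r₁ l₂ r₂ : LTree α} :
      Iso l₁ r₂ → Iso r₁ l₂ → Iso (node l₁ r₁) (node l₂ r₂)

/-- Equality of possibly empty trees (`none` is the empty tree). -/
def OptIso : Option (LTree α) → Option (LTree α) → Prop
  | none, none => True
  | some t₁, some t₂ => Iso t₁ t₂
  | _, _ => False

/-- Restriction `T|_S`: keep exactly the leaves with labels in `S`, suppressing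
the resulting degree-two vertices and degree-one roots; the result is `none`
when no leaf survives. -/
def restrict : LTree α → Finset α → Option (LTree α)
  | leaf a, S => if a ∈ S then some (leaf a) else none
  | node l r, S =>
    match restrict l S, restrict r S with
    | some l', some r' => some (node l' r')
    | some l', none => some l'
    | none, some r' => some r'
    | none, none => none

/-- `T − X`: remove from `T` every leaf whose label lies in `X`. -/
def remove (T : LTree α) (X : Finset α) : Option (LTree α) :=
  restrict T (labels T \ X)

/-- The leaf-removal distance `d_LR(T₁,T₂)`: the minimum number of labels
whose removal makes the two trees equal. -/
noncomputable def dLR (T₁ T₂ : LTree α) : ℕ :=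
  sInf {n | ∃ X : Finset α, X ⊆ labels T₁ ∪ labels T₂ ∧ X.card = n ∧
    OptIso (remove T₁ X) (remove T₂ X)}

def labelsO : Option (LTree α) → Finset α
  | none => ∅
  | some t => labels t

def GoodO : Option (LTree α) → Prop
  | none => True
  | some t => Good t

def restrictO : Option (LTree α) → Finset α → Option (LTree α)
  | none, _ => none
  | some t, S => restrict t S

/-- A family of (possibly empty) trees is compatible if there is a single tree,
on the union of their label sets, which displays all of them. -/
def CompatibleFamO {ι : Type*} (f : ι → Option (LTree α)) : Prop :=
  ∃ TO : Option (LTree α), GoodO TO ∧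
    (↑(labelsO TO) : Set α) = (⋃ i, ↑(labelsO (f i))) ∧
    ∀ i, OptIso (restrictO TO (labelsO (f i))) (f i)

/-- A family of trees is compatible if a single tree displays all of them. -/
def CompatibleFam {ι : Type*} (𝒯 : ι → LTree α) : Prop :=
  CompatibleFamO fun i => some (𝒯 i)

/-- `X` is a leaf-disagreement for the family `𝒯`: removing `X i` from `𝒯 i`
yields a compatible family. -/
def IsLeafDisagreement {ι : Type*} (𝒯 : ι → LTree α) (X : ι → Finset α) : Prop :=
  CompatibleFamO fun i => remove (𝒯 i) (X i)

/-- `X'` is a label-disagreement for the family `𝒯`. -/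
def IsLabelDisagreement {ι : Type*} (𝒯 : ι → LTree α) (X' : Finset α) : Prop :=
  CompatibleFamO fun i => remove (𝒯 i) X'

/-- `MASTRL 𝒯`: the minimum size of a leaf-disagreement for `𝒯`. -/
noncomputable def MASTRL {t : ℕ} (𝒯 : Fin t → LTree α) : ℕ :=
  sInf {v | ∃ X : Fin t → Finset α, (∀ i, X i ⊆ labels (𝒯 i)) ∧
    (∑ i, (X i).card) = v ∧ IsLeafDisagreement 𝒯 X}

/-- The triplet `ab|c` (as a tree). -/
def tripletTree (a b c : α) : LTree α := node (node (leaf a) (leaf b)) (leaf c)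

/-- A rooted triplet: a tree with exactly three (distinctly labeled) leaves. -/
def IsTriplet (R : LTree α) : Prop := Good R ∧ (labels R).card = 3

/-- `ab|c` is a triplet of `T`, i.e. `T|_{a,b,c} = ab|c`. -/
def IsTripletOf (T : LTree α) (a b c : α) : Prop :=
  OptIso (restrict T {a, b, c}) (some (tripletTree a b c))

/-- `tr(T)`: the triplet decomposition of `T`. -/
def trSet (T : LTree α) : Set (LTree α) :=
  {R | ∃ a b c : α, R = tripletTree a b c ∧ IsTripletOf T a b c}

/-- A set of trees is compatible: some tree on the union of the label sets
displays every member. -/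
def CompatibleSet (S : Set (LTree α)) : Prop :=
  ∃ TO : Option (LTree α), GoodO TO ∧
    (↑(labelsO TO) : Set α) = (⋃ R ∈ S, ↑(labels R)) ∧
    ∀ R ∈ S, OptIso (restrictO TO (labels R)) (some R)

/-- `MINRTI ℛ`: the minimum number of triplets to delete from `ℛ` so that the
remaining triplets are compatible. -/
noncomputable def MINRTI {t : ℕ} (R : Fin t → LTree α) : ℕ :=
  sInf {m | ∃ s : Finset (Fin t), s.card = m ∧
    CompatibleFam (fun i : {i : Fin t // i ∉ s} => R i.1)}

/-- Graft the leaf `x` at the position (edge) addressed by `p` in `T`.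
The empty address grafts `x` above the root of `T` (the `⊥` case); the address
of an internal/leaf vertex `v` grafts `x` on the edge between `v` and its
parent.  `none` when the address is invalid. -/
def graftAt (x : α) : LTree α → List Bool → Option (LTree α)
  | T, [] => some (node (leaf x) T)
  | leaf _, _ :: _ => none
  | node l r, b :: p =>
    if b then (graftAt x l p).map (fun l' => node l' r)
    else (graftAt x r p).map (fun r' => node l r')

/-- `T'` is obtained from `T` by a single LPR (leaf prune-and-regraft) move on
the leaf `x`: prune `x` from `T` and regraft it, either on an edge of
`T − {x}` or above its root. -/
def LPRStep (x : α) (T T' : LTree α) : Prop :=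
  (remove T {x} = none ∧ T' = leaf x) ∨
  ∃ T₀ p, remove T {x} = some T₀ ∧ graftAt x T₀ p = some T'

/-- `TurnsInto L T T'`: the LPR sequence with (ordered) leaf list `L` turns
`T` into `T'`. -/
inductive TurnsInto : List α → LTree α → LTree α → Prop
  | nil {T T' : LTree α} : Iso T T' → TurnsInto [] T T'
  | cons {x : α} {xs : List α} {T T'' T' : LTree α} :
      LPRStep x T T'' → TurnsInto xs T'' T' → TurnsInto (x :: xs) T T'

/-- `confset(T₁,T₂)`: the collection of 3-label sets `{a,b,c}` such that
`T₁` contains a triplet on `{a,b,c}` conflicting with a triplet of `T₂`. -/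
def confset (T₁ T₂ : LTree α) : Set (Finset α) :=
  {s | ∃ a b c : α, s = {a, b, c} ∧ IsTripletOf T₁ a b c ∧
    (IsTripletOf T₂ a c b ∨ IsTripletOf T₂ b c a)}

/-- `X` is a minimal disagreement between `T₁` and `T₂`. -/
def MinimalDisagreement (T₁ T₂ : LTree α) (X : Finset α) : Prop :=
  X ⊆ labels T₁ ∪ labels T₂ ∧
  OptIso (remove T₁ X) (remove T₂ X) ∧
  ∀ X' ⊂ X, ¬ OptIso (remove T₁ X') (remove T₂ X')

/-- `u` is (the rooted subtree hanging at) a node of `T`. -/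
inductive IsSubtree : LTree α → LTree α → Prop
  | refl (T : LTree α) : IsSubtree T T
  | left {u l r : LTree α} : IsSubtree u l → IsSubtree u (node l r)
  | right {u l r : LTree α} : IsSubtree u r → IsSubtree u (node l r)

/-- `u` is the least common ancestor in `T` of the labels in `Z`. -/
def IsLCA (T : LTree α) (Z : Finset α) (u : LTree α) : Prop :=
  IsSubtree u T ∧ Z ⊆ labels u ∧
    ∀ w, IsSubtree w T → Z ⊆ labels w → IsSubtree u w

end LTree

set_option linter.unusedSectionVars false

deriving instance DecidableEq for LTree

namespace LTree

variable {α : Type u} [DecidableEq α]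

-- basic lemmas
theorem labels_nonempty : ∀ T : LTree α, (labels T).Nonempty
  | leaf a => ⟨a, by simp [labels]⟩
  | node l r => by
      obtain ⟨a, ha⟩ := labels_nonempty l
      exact ⟨a, by simp [labels, ha]⟩

theorem labelsO_restrict : ∀ (T : LTree α) (S : Finset α),
    labelsO (restrict T S) = labels T ∩ S
  | leaf a, S => by
      by_cases h : a ∈ S <;> simp [restrict, h, labelsO, labels, Finset.singleton_inter_of_mem,
        Finset.singleton_inter_of_notMem]
  | node l r, S => by
      have hl := labelsO_restrict l S
      have hr := labelsO_restrict r S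
      simp only [restrict]
      rcases h1 : restrict l S with _ | l' <;> rcases h2 : restrict r S with _ | r' <;>
        rw [h1] at hl <;> rw [h2] at hr <;>
        simp only [labelsO, labels] at hl hr ⊢ <;>
        simp [labels, Finset.union_inter_distrib_right, ← hl, ← hr]

theorem restrict_eq_none_iff {T : LTree α} {S : Finset α} :
    restrict T S = none ↔ labels T ∩ S = ∅ := by
  constructor
  · intro h
    have := labelsO_restrict T S
    rw [h] at this; simpa [labelsO] using this.symm
  · intro h
    rcases hr : restrict T S with _ | t
    · rfl
    · exfalso
      have := labelsO_restrict T S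
      rw [hr, h] at this
      simp only [labelsO] at this
      exact (labels_nonempty t).ne_empty this

theorem good_restrict : ∀ (T : LTree α) (S : Finset α), Good T → GoodO (restrict T S)
  | leaf a, S, _ => by by_cases h : a ∈ S <;> simp [restrict, h, GoodO, Good]
  | node l r, S, hg => by
      obtain ⟨hgl, hgr, hd⟩ := hg
      have hl := good_restrict l S hgl
      have hr := good_restrict r S hgr
      have e1 := labelsO_restrict l S
      have e2 := labelsO_restrict r S
      simp only [restrict]
      cases h1 : restrict l S with
      | none => cases h2 : restrict r S with
        | none => trivial
        | some r' => rw [h2] at hr; exact hr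
      | some l' => cases h2 : restrict r S with
        | none => rw [h1] at hl; exact hl
        | some r' =>
          rw [h1] at hl e1; rw [h2] at hr e2
          simp only [labelsO] at e1 e2
          exact ⟨hl, hr, e1 ▸ e2 ▸ hd.mono Finset.inter_subset_left Finset.inter_subset_left⟩

theorem restrict_of_subset : ∀ {T : LTree α} {S : Finset α}, labels T ⊆ S → restrict T S = some T
  | leaf a, S, h => by simp only [labels, Finset.singleton_subset_iff] at h; simp [restrict, h]
  | node l r, S, h => by
      simp only [labels, Finset.union_subset_iff] at h
      simp only [restrict, restrict_of_subset h.1, restrict_of_subset h.2]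

theorem restrictO_restrict : ∀ (T : LTree α) (S S' : Finset α),
    restrictO (restrict T S) S' = restrict T (S ∩ S')
  | leaf a, S, S' => by
      by_cases h : a ∈ S <;> by_cases h' : a ∈ S' <;>
        simp [restrict, restrictO, h, h', Finset.mem_inter]
  | node l r, S, S' => by
      have hl := restrictO_restrict l S S'
      have hr := restrictO_restrict r S S'
      show restrictO (match restrict l S, restrict r S with
        | some l', some r' => some (node l' r')
        | some l', none => some l'
        | none, some r' => some r'
        | none, none => none) S' = _
      conv_rhs => rw [show restrict (node l r) (S ∩ S') = (match restrict l (S ∩ S'),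
        restrict r (S ∩ S') with
        | some l', some r' => some (node l' r')
        | some l', none => some l'
        | none, some r' => some r'
        | none, none => none) from rfl]
      rw [← hl, ← hr]
      cases h1 : restrict l S with
      | none => cases h2 : restrict r S with
        | none => rfl
        | some r' =>
          show restrict r' S' = _
          simp only [restrictO]
          cases restrict r' S' <;> rfl
      | some l' => cases h2 : restrict r S with
        | none =>
          show restrict l' S' = _
          simp only [restrictO]
          cases restrict l' S' <;> rfl
        | some r' =>
          show restrict (node l' r') S' = _
          simp only [restrictO]
          rfl

theorem restrict_inter_labels (T : LTree α) (S : Finset α) :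
    restrict T S = restrict T (labels T ∩ S) := by
  have := restrictO_restrict T (labels T) S
  rwa [restrict_of_subset (le_refl _), restrictO] at this

theorem eq_leaf_of_labels_singleton : ∀ {T : LTree α} {a : α}, Good T → labels T = {a} → T = leaf a
  | leaf b, a, _, h => by simp only [labels, Finset.singleton_inj] at h; rw [h]
  | node l r, a, ⟨hgl, hgr, hd⟩, h => by
      exfalso
      have h1 : labels l ⊆ {a} := h ▸ Finset.subset_union_left
      have h2 : labels r ⊆ {a} := h ▸ Finset.subset_union_right
      rcases Finset.subset_singleton_iff.1 h1 with e1 | e1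
      · exact (labels_nonempty l).ne_empty e1
      rcases Finset.subset_singleton_iff.1 h2 with e2 | e2
      · exact (labels_nonempty r).ne_empty e2
      exact Finset.disjoint_left.1 hd (e1 ▸ Finset.mem_singleton_self a)
        (e2 ▸ Finset.mem_singleton_self a)

theorem iso_refl : ∀ T : LTree α, Iso T T
  | leaf a => Iso.leaf a
  | node l r => Iso.node (iso_refl l) (iso_refl r)

theorem Iso.labels_eq {T₁ T₂ : LTree α} (h : Iso T₁ T₂) : labels T₁ = labels T₂ := by
  induction h with
  | leaf a => rfl
  | node h1 h2 ih1 ih2 => simp only [labels, ih1, ih2]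
  | swap h1 h2 ih1 ih2 => simp only [labels, ih1, ih2, Finset.union_comm]

theorem Iso.good {T₁ T₂ : LTree α} (h : Iso T₁ T₂) (hg : Good T₁) : Good T₂ := by
  induction h with
  | leaf a => trivial
  | node h1 h2 ih1 ih2 =>
      obtain ⟨g1, g2, hd⟩ := hg
      exact ⟨ih1 g1, ih2 g2, h1.labels_eq ▸ h2.labels_eq ▸ hd⟩
  | swap h1 h2 ih1 ih2 =>
      obtain ⟨g1, g2, hd⟩ := hg
      exact ⟨ih2 g2, ih1 g1, h1.labels_eq ▸ h2.labels_eq ▸ hd.symm⟩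

theorem optIso_none_left {o : Option (LTree α)} (h : OptIso none o) : o = none := by
  cases o with
  | none => rfl
  | some t => exact absurd h (by simp [OptIso])

theorem optIso_some_left {t : LTree α} {o : Option (LTree α)} (h : OptIso (some t) o) :
    ∃ t', o = some t' ∧ Iso t t' := by
  cases o with
  | none => exact absurd h (by simp [OptIso])
  | some t' => exact ⟨t', rfl, h⟩

theorem iso_restrict {T₁ T₂ : LTree α} (h : Iso T₁ T₂) (S : Finset α) :
    OptIso (restrict T₁ S) (restrict T₂ S) := by
  induction h with
  | leaf a => by_cases h : a ∈ S <;> simp [restrict, h, OptIso, Iso.leaf]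
  | @node l₁ r₁ l₂ r₂ h1 h2 ih1 ih2 =>
      show OptIso (match restrict l₁ S, restrict r₁ S with
        | some l', some r' => some (node l' r')
        | some l', none => some l'
        | none, some r' => some r'
        | none, none => none) (match restrict l₂ S, restrict r₂ S with
        | some l', some r' => some (node l' r')
        | some l', none => some l'
        | none, some r' => some r'
        | none, none => none)
      cases h1' : restrict l₁ S with
      | none =>
        rw [h1'] at ih1
        rw [optIso_none_left ih1]
        cases h2' : restrict r₁ S with
        | none => rw [h2'] at ih2; rw [optIso_none_left ih2]; trivial
        | some r' =>
          rw [h2'] at ih2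
          obtain ⟨r'', e, hi⟩ := optIso_some_left ih2
          rw [e]; exact hi
      | some l' =>
        rw [h1'] at ih1
        obtain ⟨l'', e1, hil⟩ := optIso_some_left ih1
        rw [e1]
        cases h2' : restrict r₁ S with
        | none => rw [h2'] at ih2; rw [optIso_none_left ih2]; exact hil
        | some r' =>
          rw [h2'] at ih2
          obtain ⟨r'', e2, hir⟩ := optIso_some_left ih2
          rw [e2]; exact Iso.node hil hir
  | @swap l₁ r₁ l₂ r₂ h1 h2 ih1 ih2 =>
      show OptIso (match restrict l₁ S, restrict r₁ S with
        | some l', some r' => some (node l' r')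
        | some l', none => some l'
        | none, some r' => some r'
        | none, none => none) (match restrict l₂ S, restrict r₂ S with
        | some l', some r' => some (node l' r')
        | some l', none => some l'
        | none, some r' => some r'
        | none, none => none)
      cases h1' : restrict l₁ S with
      | none =>
        rw [h1'] at ih1
        rw [optIso_none_left ih1]
        cases h2' : restrict r₁ S with
        | none => rw [h2'] at ih2; rw [optIso_none_left ih2]; trivial
        | some r' =>
          rw [h2'] at ih2
          obtain ⟨r'', e, hi⟩ := optIso_some_left ih2
          rw [e]; exact hi
      | some l' =>
        rw [h1'] at ih1
        obtain ⟨l'', e1, hil⟩ := optIso_some_left ih1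
        rw [e1]
        cases h2' : restrict r₁ S with
        | none => rw [h2'] at ih2; rw [optIso_none_left ih2]; exact hil
        | some r' =>
          rw [h2'] at ih2
          obtain ⟨r'', e2, hir⟩ := optIso_some_left ih2
          rw [e2]; exact Iso.swap hil hir

theorem optIso_restrictO {o₁ o₂ : Option (LTree α)} (h : OptIso o₁ o₂) (S : Finset α) :
    OptIso (restrictO o₁ S) (restrictO o₂ S) := by
  cases o₁ with
  | none => rw [optIso_none_left h]; trivial
  | some t =>
    obtain ⟨t', e, hi⟩ := optIso_some_left h
    rw [e]
    exact iso_restrict hi S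

def numLeaves : LTree α → ℕ
  | leaf _ => 1
  | node l r => numLeaves l + numLeaves r

theorem one_le_numLeaves : ∀ T : LTree α, 1 ≤ numLeaves T
  | leaf _ => le_refl _
  | node l r => le_trans (one_le_numLeaves l) (Nat.le_add_right _ _)

theorem card_labels : ∀ {T : LTree α}, Good T → (labels T).card = numLeaves T
  | leaf a, _ => by simp [labels, numLeaves]
  | node l r, ⟨hgl, hgr, hd⟩ => by
      simp only [labels, numLeaves, Finset.card_union_of_disjoint hd,
        card_labels hgl, card_labels hgr]

/-- All ways to insert leaf `x` into `T`. -/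
def ins (x : α) : LTree α → List (LTree α)
  | leaf a => [node (leaf x) (leaf a), node (leaf a) (leaf x)]
  | node l r => [node (leaf x) (node l r), node (node l r) (leaf x)]
      ++ (ins x l).map (fun l' => node l' r)
      ++ (ins x r).map (fun r' => node l r')

theorem above_mem_ins (x : α) (T : LTree α) :
    node (leaf x) T ∈ ins x T ∧ node T (leaf x) ∈ ins x T := by
  cases T <;> simp [ins]

theorem mem_ins_node : ∀ {x : α} {T T' : LTree α}, T' ∈ ins x T → ∃ u v, T' = node u v := by
  intro x T T' h
  cases T with
  | leaf a => simp only [ins, List.mem_cons, List.mem_singleton] at h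
              rcases h with h | h | h <;> first | exact ⟨_, _, h⟩ | cases h
  | node l r =>
      simp only [ins, List.mem_append, List.mem_cons, List.mem_singleton, List.mem_map,
        List.not_mem_nil, or_false] at h
      rcases h with ((h | h) | ⟨a, _, h⟩) | ⟨a, _, h⟩ <;> first | exact ⟨_, _, h⟩ | exact ⟨_, _, h.symm⟩

theorem labels_of_mem_ins : ∀ {x : α} {T T' : LTree α}, T' ∈ ins x T →
    labels T' = insert x (labels T)
  | x, leaf a, T', h => by
      simp only [ins, List.mem_cons, List.mem_singleton, List.not_mem_nil, or_false] at h
      rcases h with h | h <;> subst h <;>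
        simp [labels, Finset.union_comm, Finset.insert_eq, -Finset.singleton_union,
          -Finset.union_singleton]
  | x, node l r, T', h => by
      simp only [ins, List.mem_append, List.mem_cons, List.mem_singleton, List.mem_map,
        List.not_mem_nil, or_false] at h
      rcases h with ((h | h) | ⟨a, ha, h⟩) | ⟨a, ha, h⟩ <;> subst h
      · simp [labels, Finset.insert_eq, -Finset.singleton_union]
      · simp [labels, Finset.union_comm, Finset.insert_eq, -Finset.singleton_union]
      · show labels a ∪ labels r = _
        rw [labels_of_mem_ins ha, show labels (node l r) = labels l ∪ labels r from rfl,
          Finset.insert_union]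
      · show labels l ∪ labels a = _
        rw [labels_of_mem_ins ha, show labels (node l r) = labels l ∪ labels r from rfl,
          Finset.union_insert]

theorem good_of_mem_ins : ∀ {x : α} {T T' : LTree α}, Good T → x ∉ labels T → T' ∈ ins x T →
    Good T'
  | x, leaf a, T', _, hx, h => by
      simp only [ins, List.mem_cons, List.mem_singleton, List.not_mem_nil, or_false] at h
      have hxa : x ≠ a := by simpa [labels] using hx
      rcases h with h | h <;> subst h <;>
        simp [Good, labels, Finset.disjoint_singleton_left, hxa, hxa.symm,
          Finset.disjoint_singleton_right]
  | x, node l r, T', ⟨hgl, hgr, hd⟩, hx, h => by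
      simp only [labels, Finset.mem_union, not_or] at hx
      simp only [ins, List.mem_append, List.mem_cons, List.mem_singleton, List.mem_map,
        List.not_mem_nil, or_false] at h
      rcases h with ((h | h) | ⟨a, ha, h⟩) | ⟨a, ha, h⟩ <;> subst h
      · exact ⟨trivial, ⟨hgl, hgr, hd⟩, by
          simp [labels, Finset.disjoint_singleton_left, hx.1, hx.2]⟩
      · exact ⟨⟨hgl, hgr, hd⟩, trivial, by
          simp [labels, Finset.disjoint_singleton_right, hx.1, hx.2]⟩
      · refine ⟨good_of_mem_ins hgl hx.1 ha, hgr, ?_⟩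
        rw [labels_of_mem_ins ha, Finset.insert_eq]
        exact Finset.disjoint_union_left.2 ⟨Finset.disjoint_singleton_left.2 hx.2, hd⟩
      · refine ⟨hgl, good_of_mem_ins hgr hx.2 ha, ?_⟩
        rw [labels_of_mem_ins ha, Finset.insert_eq]
        exact Finset.disjoint_union_right.2 ⟨Finset.disjoint_singleton_right.2 hx.1, hd⟩

theorem restrict_of_mem_ins : ∀ {x : α} {T T' : LTree α} {S : Finset α}, x ∉ S → T' ∈ ins x T →
    restrict T' S = restrict T S
  | x, leaf a, T', S, hx, h => by
      simp only [ins, List.mem_cons, List.mem_singleton, List.not_mem_nil, or_false] at h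
      rcases h with h | h <;> subst h <;>
        show (match restrict (leaf _) S, restrict (leaf _) S with
          | some l', some r' => some (node l' r')
          | some l', none => some l'
          | none, some r' => some r'
          | none, none => none) = _ <;>
        simp only [restrict, if_neg hx] <;> by_cases ha : a ∈ S <;> simp [ha]
  | x, node l r, T', S, hx, h => by
      simp only [ins, List.mem_append, List.mem_cons, List.mem_singleton, List.mem_map,
        List.not_mem_nil, or_false] at h
      rcases h with ((h | h) | ⟨a, ha, h⟩) | ⟨a, ha, h⟩ <;> subst h
      · show (match restrict (leaf x) S, restrict (node l r) S with
          | some l', some r' => some (node l' r')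
          | some l', none => some l'
          | none, some r' => some r'
          | none, none => none) = _
        rw [show restrict (leaf x) S = none from by simp [restrict, hx]]
        cases restrict (node l r) S <;> rfl
      · show (match restrict (node l r) S, restrict (leaf x) S with
          | some l', some r' => some (node l' r')
          | some l', none => some l'
          | none, some r' => some r'
          | none, none => none) = _
        rw [show restrict (leaf x) S = none from by simp [restrict, hx]]
        cases restrict (node l r) S <;> rfl
      · show (match restrict a S, restrict r S with
          | some l', some r' => some (node l' r')
          | some l', none => some l'
          | none, some r' => some r'
          | none, none => none) = _
        rw [restrict_of_mem_ins hx ha]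
        rfl
      · show (match restrict l S, restrict a S with
          | some l', some r' => some (node l' r')
          | some l', none => some l'
          | none, some r' => some r'
          | none, none => none) = _
        rw [restrict_of_mem_ins hx ha]
        rfl

theorem length_ins : ∀ (x : α) (T : LTree α), (ins x T).length + 2 = 4 * numLeaves T
  | x, leaf a => by simp [ins, numLeaves]
  | x, node l r => by
      have hl := length_ins x l
      have hr := length_ins x r
      simp only [ins, List.length_append, List.length_map, List.length_cons,
        List.length_nil, numLeaves] at *
      omega

theorem mem_ins_of_restrict : ∀ {T : LTree α} {x : α} {T₀ : LTree α}, Good T → x ∈ labels T →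
    restrict T (labels T \ {x}) = some T₀ → T ∈ ins x T₀
  | leaf a, x, T₀, _, hx, hres => by
      simp only [labels, Finset.mem_singleton] at hx
      subst hx
      simp [restrict, labels] at hres
  | node l r, x, T₀, ⟨hgl, hgr, hd⟩, hx, hres => by
      set S := labels (node l r) \ {x} with hS
      have hlabel : labels (node l r) = labels l ∪ labels r := rfl
      have rl : restrict l S = restrict l (labels l \ {x}) := by
        rw [restrict_inter_labels l S]
        congr 1
        ext y
        simp only [hS, hlabel, Finset.mem_inter, Finset.mem_sdiff, Finset.mem_union,
          Finset.mem_singleton]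
        tauto
      have rr : restrict r S = restrict r (labels r \ {x}) := by
        rw [restrict_inter_labels r S]
        congr 1
        ext y
        simp only [hS, hlabel, Finset.mem_inter, Finset.mem_sdiff, Finset.mem_union,
          Finset.mem_singleton]
        tauto
      have hres' : (match restrict l S, restrict r S with
          | some l', some r' => some (node l' r')
          | some l', none => some l'
          | none, some r' => some r'
          | none, none => none) = some T₀ := hres
      rcases Finset.mem_union.1 hx with hxl | hxr
      · have hxr : x ∉ labels r := Finset.disjoint_left.1 hd hxl
        have rrr : restrict r S = some r := by
          rw [rr, show labels r \ {x} = labels r from by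
            rwa [Finset.sdiff_eq_self_iff_disjoint, Finset.disjoint_singleton_right]]
          exact restrict_of_subset (le_refl _)
        cases hl0 : restrict l (labels l \ {x}) with
        | none =>
          have : labels l \ {x} = ∅ := by
            have h0 : labels l ∩ (labels l \ {x}) = ∅ := restrict_eq_none_iff.1 hl0
            rwa [Finset.inter_eq_right.2 Finset.sdiff_subset] at h0
          have hsub : labels l ⊆ {x} := by
            intro y hy
            by_contra hne
            exact Finset.notMem_empty y (this ▸ Finset.mem_sdiff.2 ⟨hy, by simpa using hne⟩)
          have : l = leaf x := eq_leaf_of_labels_singleton hgl (by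
            rcases Finset.subset_singleton_iff.1 hsub with e | e
            · exact absurd e (labels_nonempty l).ne_empty
            · exact e)
          subst this
          rw [rl] at hres'
          rw [hl0, rrr] at hres'
          have : T₀ = r := by injection hres' with h; exact h.symm
          subst this
          exact (above_mem_ins x T₀).1
        | some l₀ =>
          rw [rl, hl0, rrr] at hres'
          have : T₀ = node l₀ r := by injection hres' with h; exact h.symm
          subst this
          have ihl : l ∈ ins x l₀ := mem_ins_of_restrict hgl hxl hl0
          simp only [ins, List.mem_append, List.mem_map]
          exact Or.inl (Or.inr ⟨l, ihl, rfl⟩)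
      · have hxl : x ∉ labels l := fun h => Finset.disjoint_left.1 hd h hxr
        have rll : restrict l S = some l := by
          rw [rl, show labels l \ {x} = labels l from by
            rwa [Finset.sdiff_eq_self_iff_disjoint, Finset.disjoint_singleton_right]]
          exact restrict_of_subset (le_refl _)
        cases hr0 : restrict r (labels r \ {x}) with
        | none =>
          have : labels r \ {x} = ∅ := by
            have h0 : labels r ∩ (labels r \ {x}) = ∅ := restrict_eq_none_iff.1 hr0
            rwa [Finset.inter_eq_right.2 Finset.sdiff_subset] at h0
          have hsub : labels r ⊆ {x} := by
            intro y hy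
            by_contra hne
            exact Finset.notMem_empty y (this ▸ Finset.mem_sdiff.2 ⟨hy, by simpa using hne⟩)
          have : r = leaf x := eq_leaf_of_labels_singleton hgr (by
            rcases Finset.subset_singleton_iff.1 hsub with e | e
            · exact absurd e (labels_nonempty r).ne_empty
            · exact e)
          subst this
          rw [rr] at hres'
          rw [hr0, rll] at hres'
          have : T₀ = l := by injection hres' with h; exact h.symm
          subst this
          exact (above_mem_ins x T₀).2
        | some r₀ =>
          rw [rr, hr0, rll] at hres'
          have : T₀ = node l r₀ := by injection hres' with h; exact h.symm
          subst this
          have ihr : r ∈ ins x r₀ := mem_ins_of_restrict hgr hxr hr0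
          simp only [ins, List.mem_append, List.mem_map]
          exact Or.inr ⟨r, ihr, rfl⟩

theorem nodup_ins : ∀ {x : α} {T : LTree α}, x ∉ labels T → (ins x T).Nodup
  | x, leaf a, hx => by
      have hxa : x ≠ a := by simpa [labels] using hx
      simp [ins, hxa]
  | x, node l r, hx => by
      have hxl : x ∉ labels l := fun h => hx (Finset.mem_union_left _ h)
      have hxr : x ∉ labels r := fun h => hx (Finset.mem_union_right _ h)
      have il : (ins x l).Nodup := nodup_ins hxl
      have ir : (ins x r).Nodup := nodup_ins hxr
      show (([node (leaf x) (node l r), node (node l r) (leaf x)]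
        ++ (ins x l).map (fun l' => node l' r)) ++ (ins x r).map (fun r' => node l r')).Nodup
      refine List.Nodup.append (List.Nodup.append ?_ ?_ ?_) ?_ ?_
      · simp
      · exact il.map (fun a b h => by rw [LTree.node.injEq] at h; exact h.1)
      · intro a ha hb
        simp only [List.mem_cons, List.mem_singleton, List.not_mem_nil, or_false] at ha
        simp only [List.mem_map] at hb
        obtain ⟨l', hl', rfl⟩ := hb
        obtain ⟨u, v, rfl⟩ := mem_ins_node hl'
        rcases ha with ha | ha
        · simp at ha
        · injection ha with h1 h2
          subst h2
          exact hxr (by simp [labels])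
      · exact ir.map (fun a b h => by rw [LTree.node.injEq] at h; exact h.2)
      · intro a ha hb
        simp only [List.mem_append, List.mem_cons, List.mem_singleton, List.not_mem_nil,
          or_false, List.mem_map] at ha hb
        obtain ⟨r', hr', rfl⟩ := hb
        rcases ha with (ha | ha) | ⟨l', hl', ha⟩
        · injection ha with h1 h2
          subst h1
          exact hxl (by simp [labels])
        · obtain ⟨u, v, rfl⟩ := mem_ins_node hr'
          simp at ha
        · injection ha with h1 h2
          subst h1
          have hll := labels_of_mem_ins hl'
          exact hxl (by rw [hll]; exact Finset.mem_insert_self x _)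

def isoList : LTree α → List (LTree α)
  | leaf a => [leaf a]
  | node l r => ((isoList l).flatMap fun l' => (isoList r).map fun r' => node l' r')
      ++ ((isoList l).flatMap fun l' => (isoList r).map fun r' => node r' l')

theorem mem_isoList_of_iso {T X : LTree α} (h : Iso T X) : X ∈ isoList T := by
  induction h with
  | leaf a => simp [isoList]
  | @node l₁ r₁ l₂ r₂ h1 h2 ih1 ih2 =>
      simp only [isoList, List.mem_append, List.mem_flatMap, List.mem_map]
      exact Or.inl ⟨l₂, ih1, r₂, ih2, rfl⟩
  | @swap l₁ r₁ l₂ r₂ h1 h2 ih1 ih2 =>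
      simp only [isoList, List.mem_append, List.mem_flatMap, List.mem_map]
      exact Or.inr ⟨r₂, ih1, l₂, ih2, rfl⟩

theorem iso_of_mem_isoList : ∀ {T X : LTree α}, X ∈ isoList T → Iso T X
  | leaf a, X, h => by
      simp only [isoList, List.mem_singleton] at h
      subst h; exact Iso.leaf a
  | node l r, X, h => by
      simp only [isoList, List.mem_append, List.mem_flatMap, List.mem_map] at h
      rcases h with ⟨l', hl', r', hr', rfl⟩ | ⟨l', hl', r', hr', rfl⟩
      · exact Iso.node (iso_of_mem_isoList hl') (iso_of_mem_isoList hr')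
      · exact Iso.swap (iso_of_mem_isoList hl') (iso_of_mem_isoList hr')

theorem length_flatMap_map {β γ δ : Type*} :
    ∀ (l : List β) (m : List γ) (g : β → γ → δ),
    (l.flatMap fun a => m.map (g a)).length = l.length * m.length
  | [], m, g => by simp
  | b :: l, m, g => by
      simp [List.flatMap_cons, length_flatMap_map l m g, Nat.succ_mul, Nat.add_comm]

theorem two_mul_length_isoList : ∀ T : LTree α, 2 * (isoList T).length = 2 ^ numLeaves T
  | leaf a => by simp [isoList, numLeaves]
  | node l r => by
      have hl := two_mul_length_isoList l
      have hr := two_mul_length_isoList r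
      simp only [isoList, List.length_append, length_flatMap_map, numLeaves, pow_add]
      rw [← hl, ← hr]
      ring

/-- number of trees on `n` labels extending a fixed tree on `k` labels -/
def gcount (k n : ℕ) : ℕ := ∏ m ∈ Finset.Ico k n, (2 * (2 * m - 1))

theorem count_restrict : ∀ (n : ℕ) (𝒳 : Finset α), 𝒳.card = n →
    ∀ (F : Finset (LTree α)), (∀ T, T ∈ F ↔ IsTreeOn T 𝒳) →
    ∀ (S : Finset α) (R : LTree α), S ⊆ 𝒳 → S.Nonempty → IsTreeOn R S →
    (F.filter fun T => restrict T S = some R).card = gcount S.card n := by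
  intro n
  induction n with
  | zero =>
      intro 𝒳 hcard F hF S R hSsub hSne hR
      exact absurd (Finset.card_eq_zero.1 hcard ▸ hSsub) (by
        simpa [Finset.subset_empty] using hSne.ne_empty)
  | succ n ih =>
      intro 𝒳 hcard F hF S R hSsub hSne hR
      by_cases hSX : S = 𝒳
      · subst hSX
        have hRF : R ∈ F := (hF R).2 hR
        have hfilter : F.filter (fun T => restrict T S = some R) = {R} := by
          ext T
          simp only [Finset.mem_filter, Finset.mem_singleton]
          constructor
          · rintro ⟨hTF, hres⟩
            have hT := (hF T).1 hTF
            rw [restrict_of_subset (hT.2 ▸ le_refl _)] at hres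
            injection hres
          · rintro rfl
            exact ⟨hRF, restrict_of_subset (hR.2 ▸ le_refl _)⟩
        rw [hfilter, Finset.card_singleton, hcard, gcount, Finset.Ico_self,
          Finset.prod_empty]
      · obtain ⟨x, hx𝒳, hxS⟩ := Finset.exists_of_ssubset ⟨hSsub, fun h => hSX
          (le_antisymm hSsub h)⟩
        set 𝒳' := 𝒳.erase x with h𝒳'
        have hcard' : 𝒳'.card = n := by rw [h𝒳', Finset.card_erase_of_mem hx𝒳, hcard]; rfl
        have hS' : S ⊆ 𝒳' := Finset.subset_erase.2 ⟨hSsub, hxS⟩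
        have hx𝒳' : x ∉ 𝒳' := Finset.notMem_erase x 𝒳
        have hne' : 𝒳'.Nonempty := hSne.mono hS'
        have hn1 : 1 ≤ n := hcard' ▸ Finset.card_pos.2 hne'
        set F' := F.image (fun T => (restrict T 𝒳').getD T) with hF'def
        -- every T ∈ F restricts to a tree on 𝒳'
        have hres𝒳' : ∀ T ∈ F, ∃ T₀, restrict T 𝒳' = some T₀ ∧ IsTreeOn T₀ 𝒳' := by
          intro T hTF
          obtain ⟨hgT, hlT⟩ := (hF T).1 hTF
          cases hrT : restrict T 𝒳' with
          | none =>
              exfalso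
              have := restrict_eq_none_iff.1 hrT
              rw [hlT, Finset.inter_eq_right.2 (Finset.erase_subset x 𝒳)] at this
              exact hne'.ne_empty this
          | some T₀ =>
              refine ⟨T₀, rfl, ?_, ?_⟩
              · have := good_restrict T 𝒳' hgT
                rwa [hrT] at this
              · have := labelsO_restrict T 𝒳'
                rw [hrT] at this
                simp only [labelsO] at this
                rw [this, hlT, Finset.inter_eq_right.2 (Finset.erase_subset x 𝒳)]
        have hF'mem : ∀ T₀, T₀ ∈ F' ↔ IsTreeOn T₀ 𝒳' := by
          intro T₀
          constructor
          · intro h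
            obtain ⟨T, hTF, hTeq⟩ := Finset.mem_image.1 h
            obtain ⟨T₀', he, hT₀'⟩ := hres𝒳' T hTF
            rw [he] at hTeq
            simp only [Option.getD_some] at hTeq
            rwa [← hTeq]
          · intro hT₀
            refine Finset.mem_image.2 ⟨node (leaf x) T₀, ?_, ?_⟩
            · refine (hF _).2 ⟨⟨trivial, hT₀.1, ?_⟩, ?_⟩
              · rw [show labels (leaf x) = {x} from rfl, hT₀.2,
                  Finset.disjoint_singleton_left]
                exact hx𝒳'
              · rw [show labels (node (leaf x) T₀) = {x} ∪ labels T₀ from rfl, hT₀.2]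
                rw [h𝒳', show ({x} : Finset α) ∪ 𝒳.erase x = insert x (𝒳.erase x) from (Finset.insert_eq x _).symm, Finset.insert_erase hx𝒳]
            · have h1 : restrict (leaf x) 𝒳' = none := by simp [restrict, hx𝒳']
              have h2 : restrict T₀ 𝒳' = some T₀ := restrict_of_subset (hT₀.2 ▸ le_refl _)
              show Option.getD (match restrict (leaf x) 𝒳', restrict T₀ 𝒳' with
                | some l', some r' => some (node l' r')
                | some l', none => some l'
                | none, some r' => some r'
                | none, none => none) _ = _
              rw [h1, h2]
              rfl
        -- the fibres split along insertions of x
        have hsplit : F.filter (fun T => restrict T S = some R)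
            = (F'.filter fun T₀ => restrict T₀ S = some R).biUnion
                (fun T₀ => (ins x T₀).toFinset) := by
          ext T
          simp only [Finset.mem_filter, Finset.mem_biUnion, List.mem_toFinset]
          constructor
          · rintro ⟨hTF, hres⟩
            obtain ⟨T₀, he, hT₀⟩ := hres𝒳' T hTF
            obtain ⟨hgT, hlT⟩ := (hF T).1 hTF
            refine ⟨T₀, ⟨?_, ?_⟩, ?_⟩
            · exact (hF'mem T₀).2 hT₀
            · have := restrictO_restrict T 𝒳' S
              rw [he, Finset.inter_eq_right.2 hS'] at this
              simp only [restrictO] at this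
              rw [this, hres]
            · refine mem_ins_of_restrict hgT (hlT ▸ hx𝒳) ?_
              rwa [hlT, ← Finset.erase_eq]
          · rintro ⟨T₀, ⟨hT₀F', hT₀res⟩, hTins⟩
            obtain ⟨hgT₀, hlT₀⟩ := (hF'mem T₀).1 hT₀F'
            have hxT₀ : x ∉ labels T₀ := hlT₀ ▸ hx𝒳'
            constructor
            · refine (hF T).2 ⟨good_of_mem_ins hgT₀ hxT₀ hTins, ?_⟩
              rw [labels_of_mem_ins hTins, hlT₀, h𝒳', Finset.insert_erase hx𝒳]
            · rw [restrict_of_mem_ins hxS hTins, hT₀res]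
        rw [hsplit, Finset.card_biUnion]
        · have hcardpiece : ∀ T₀ ∈ F'.filter (fun T₀ => restrict T₀ S = some R),
              (ins x T₀).toFinset.card = 2 * (2 * n - 1) := by
            intro T₀ hT₀
            obtain ⟨hgT₀, hlT₀⟩ := (hF'mem T₀).1 (Finset.mem_filter.1 hT₀).1
            have hxT₀ : x ∉ labels T₀ := hlT₀ ▸ hx𝒳'
            rw [List.toFinset_card_of_nodup (nodup_ins hxT₀)]
            have hlen := length_ins x T₀
            have hnl : numLeaves T₀ = n := by rw [← card_labels hgT₀, hlT₀, hcard']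
            omega
          rw [Finset.sum_congr rfl hcardpiece, Finset.sum_const,
            ih 𝒳' hcard' F' hF'mem S R hS' hSne hR, smul_eq_mul]
          have hkn : S.card ≤ n := hcard' ▸ Finset.card_le_card hS'
          rw [gcount, gcount, Finset.prod_Ico_succ_top hkn]
        · intro T₀ h₀ T₁ h₁ hne
          simp only [Finset.mem_coe, Finset.mem_filter] at h₀ h₁
          obtain ⟨hg₀, hl₀⟩ := (hF'mem T₀).1 h₀.1
          obtain ⟨hg₁, hl₁⟩ := (hF'mem T₁).1 h₁.1
          refine Finset.disjoint_left.2 fun T hT hT' => hne ?_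
          rw [List.mem_toFinset] at hT hT'
          have e0 : restrict T 𝒳' = some T₀ := by
            rw [restrict_of_mem_ins hx𝒳' hT]
            exact restrict_of_subset (hl₀ ▸ le_refl _)
          have e1 : restrict T 𝒳' = some T₁ := by
            rw [restrict_of_mem_ins hx𝒳' hT']
            exact restrict_of_subset (hl₁ ▸ le_refl _)
          rw [e0] at e1
          injection e1

theorem restrict_isTreeOn {T : LTree α} {𝒳 S : Finset α} (hT : IsTreeOn T 𝒳)
    (hS : S ⊆ 𝒳) (hSne : S.Nonempty) :
    ∃ R, restrict T S = some R ∧ IsTreeOn R S := by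
  cases hrT : restrict T S with
  | none =>
      exfalso
      have := restrict_eq_none_iff.1 hrT
      rw [hT.2, Finset.inter_eq_right.2 hS] at this
      exact hSne.ne_empty this
  | some R =>
      refine ⟨R, rfl, ?_, ?_⟩
      · have := good_restrict T S hT.1
        rwa [hrT] at this
      · have := labelsO_restrict T S
        rw [hrT] at this
        simp only [labelsO] at this
        rw [this, hT.2, Finset.inter_eq_right.2 hS]

def dodd (k : ℕ) : ℕ := ∏ m ∈ Finset.Ico 1 k, (2 * m - 1)

theorem dodd_pos (k : ℕ) : 0 < dodd k :=
  Finset.prod_pos fun m hm => by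
    have := (Finset.mem_Ico.1 hm).1; omega

theorem gcount_one_eq (k : ℕ) : gcount 1 k = 2 ^ (k - 1) * dodd k := by
  rw [gcount, dodd, Finset.prod_mul_distrib, Finset.prod_const, Nat.card_Ico]

theorem gcount_mul {k n : ℕ} (h1 : 1 ≤ k) (h2 : k ≤ n) :
    gcount 1 k * gcount k n = gcount 1 n := by
  rw [gcount, gcount, gcount, Finset.prod_Ico_consecutive _ h1 h2]

theorem dodd_factorial : ∀ j : ℕ, dodd (j + 1) * (2 ^ j * j.factorial) = (2 * j).factorial
  | 0 => by simp [dodd]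
  | j + 1 => by
      have ih := dodd_factorial j
      have h1 : dodd (j + 2) = dodd (j + 1) * (2 * j + 1) := by
        have hp := Finset.prod_Ico_succ_top (f := fun m => 2 * m - 1)
          (by omega : 1 ≤ j + 1)
        rw [dodd, dodd, hp]
        congr 1 <;> omega
      have h2 : (2 * (j + 1)).factorial = (2 * j + 1 + 1) * ((2 * j + 1) * (2 * j).factorial) := by
        rw [show 2 * (j + 1) = (2 * j + 1) + 1 by ring, Nat.factorial_succ, Nat.factorial_succ]
      rw [h1, h2, ← ih, Nat.factorial_succ, pow_succ]
      ring

theorem card_F {n : ℕ} {𝒳 : Finset α} (hcard : 𝒳.card = n) (hn : 1 ≤ n)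
    {F : Finset (LTree α)} (hF : ∀ T, T ∈ F ↔ IsTreeOn T 𝒳) :
    F.card = gcount 1 n := by
  obtain ⟨x₀, hx₀⟩ := Finset.card_pos.1 (hcard ▸ hn)
  have hsub : ({x₀} : Finset α) ⊆ 𝒳 := Finset.singleton_subset_iff.2 hx₀
  have hleaf : IsTreeOn (leaf x₀) ({x₀} : Finset α) := ⟨trivial, rfl⟩
  have key := count_restrict n 𝒳 hcard F hF {x₀} (leaf x₀) hsub (Finset.singleton_nonempty x₀) hleaf
  rw [Finset.card_singleton] at key
  rw [← key]
  congr 1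
  refine (Finset.filter_eq_self.2 fun T hTF => ?_).symm
  obtain ⟨R, hres, hR⟩ := restrict_isTreeOn ((hF T).1 hTF) hsub (Finset.singleton_nonempty x₀)
  rw [hres, eq_leaf_of_labels_singleton hR.1 hR.2]

open Classical in
theorem agree_pairs_bound {n k : ℕ} {𝒳 : Finset α} (hcard : 𝒳.card = n)
    {F : Finset (LTree α)} (hF : ∀ T, T ∈ F ↔ IsTreeOn T 𝒳)
    {S : Finset α} (hS : S ⊆ 𝒳) (hk : S.card = k) (hk1 : 1 ≤ k) :
    ((F ×ˢ F).filter fun p : LTree α × LTree α => OptIso (restrict p.1 S) (restrict p.2 S)).card * dodd k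
      ≤ F.card ^ 2 := by
  classical
  have hSne : S.Nonempty := Finset.card_pos.1 (hk ▸ hk1)
  have hkn : k ≤ n := hcard ▸ hk ▸ Finset.card_le_card hS
  have hn1 : 1 ≤ n := le_trans hk1 hkn
  set N := gcount k n with hN
  -- bound the inner fibre for a fixed T₁
  have inner : ∀ T₁ ∈ F,
      (F.filter fun T₂ => OptIso (restrict T₁ S) (restrict T₂ S)).card ≤ 2 ^ (k - 1) * N := by
    intro T₁ hT₁
    obtain ⟨R₁, hres₁, hR₁⟩ := restrict_isTreeOn ((hF T₁).1 hT₁) hS hSne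
    have hsub : (F.filter fun T₂ => OptIso (restrict T₁ S) (restrict T₂ S))
        ⊆ (isoList R₁).toFinset.biUnion fun R₂ =>
            F.filter fun T₂ => restrict T₂ S = some R₂ := by
      intro T₂ hT₂
      obtain ⟨hT₂F, hiso⟩ := Finset.mem_filter.1 hT₂
      rw [hres₁] at hiso
      obtain ⟨R₂, he₂, hi⟩ := optIso_some_left hiso
      exact Finset.mem_biUnion.2 ⟨R₂, List.mem_toFinset.2 (mem_isoList_of_iso hi),
        Finset.mem_filter.2 ⟨hT₂F, he₂⟩⟩
    calc (F.filter fun T₂ => OptIso (restrict T₁ S) (restrict T₂ S)).card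
        ≤ ∑ R₂ ∈ (isoList R₁).toFinset,
            (F.filter fun T₂ => restrict T₂ S = some R₂).card :=
          le_trans (Finset.card_le_card hsub) (Finset.card_biUnion_le)
      _ ≤ ∑ R₂ ∈ (isoList R₁).toFinset, N := by
          refine Finset.sum_le_sum fun R₂ hR₂ => ?_
          have hi : Iso R₁ R₂ := iso_of_mem_isoList (List.mem_toFinset.1 hR₂)
          have hR₂' : IsTreeOn R₂ S := ⟨hi.good hR₁.1, hi.labels_eq ▸ hR₁.2⟩
          rw [hN, ← hk]
          exact le_of_eq (count_restrict n 𝒳 hcard F hF S R₂ hS hSne hR₂')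
      _ ≤ (isoList R₁).length * N := by
          rw [Finset.sum_const, smul_eq_mul]
          exact Nat.mul_le_mul_right _ (List.toFinset_card_le _)
      _ ≤ 2 ^ (k - 1) * N := by
          refine Nat.mul_le_mul_right _ ?_
          have h2 := two_mul_length_isoList R₁
          have hnl : numLeaves R₁ = k := by rw [← card_labels hR₁.1, hR₁.2, hk]
          rw [hnl] at h2
          have : 2 ^ k = 2 * 2 ^ (k - 1) := by
            conv_lhs => rw [show k = 1 + (k - 1) by omega]
            rw [pow_add, pow_one]
          omega
  -- bound the pair count
  have houter : ((F ×ˢ F).filter fun p : LTree α × LTree α => OptIso (restrict p.1 S) (restrict p.2 S)).card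
      ≤ F.card * (2 ^ (k - 1) * N) := by
    have hsub : ((F ×ˢ F).filter fun p : LTree α × LTree α => OptIso (restrict p.1 S) (restrict p.2 S))
        ⊆ F.biUnion fun T₁ =>
            (F.filter fun T₂ => OptIso (restrict T₁ S) (restrict T₂ S)).image
              (Prod.mk T₁) := by
      rintro ⟨T₁, T₂⟩ hp
      obtain ⟨hmem, hiso⟩ := Finset.mem_filter.1 hp
      obtain ⟨h₁, h₂⟩ := Finset.mem_product.1 hmem
      exact Finset.mem_biUnion.2 ⟨T₁, h₁,
        Finset.mem_image.2 ⟨T₂, Finset.mem_filter.2 ⟨h₂, hiso⟩, rfl⟩⟩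
    calc ((F ×ˢ F).filter fun p : LTree α × LTree α => OptIso (restrict p.1 S) (restrict p.2 S)).card
        ≤ ∑ T₁ ∈ F, ((F.filter fun T₂ =>
            OptIso (restrict T₁ S) (restrict T₂ S)).image (Prod.mk T₁)).card :=
          le_trans (Finset.card_le_card hsub) Finset.card_biUnion_le
      _ ≤ ∑ T₁ ∈ F, (2 ^ (k - 1) * N) := by
          refine Finset.sum_le_sum fun T₁ hT₁ => ?_
          exact le_trans (Finset.card_image_le) (inner T₁ hT₁)
      _ = F.card * (2 ^ (k - 1) * N) := by rw [Finset.sum_const, smul_eq_mul]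
  calc ((F ×ˢ F).filter fun p : LTree α × LTree α => OptIso (restrict p.1 S) (restrict p.2 S)).card * dodd k
      ≤ F.card * (2 ^ (k - 1) * N) * dodd k := Nat.mul_le_mul_right _ houter
    _ = F.card * (gcount 1 k * N) := by rw [gcount_one_eq]; ring
    _ = F.card * F.card := by rw [gcount_mul hk1 hkn, ← card_F hcard hn1 hF]
    _ = F.card ^ 2 := (sq (F.card)).symm

theorem dLR_dichotomy {𝒳 : Finset α} {T₁ T₂ : LTree α} {n k : ℕ}
    (h₁ : IsTreeOn T₁ 𝒳) (h₂ : IsTreeOn T₂ 𝒳) (hcard : 𝒳.card = n) :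
    n ≤ dLR T₁ T₂ + (k - 1) ∨
    ∃ S : Finset α, S ⊆ 𝒳 ∧ S.card = k ∧ OptIso (restrict T₁ S) (restrict T₂ S) := by
  have hlab : labels T₁ ∪ labels T₂ = 𝒳 := by rw [h₁.2, h₂.2, Finset.union_self]
  have hne : {m | ∃ X : Finset α, X ⊆ labels T₁ ∪ labels T₂ ∧ X.card = m ∧
      OptIso (remove T₁ X) (remove T₂ X)}.Nonempty := by
    refine ⟨𝒳.card, 𝒳, hlab ▸ le_refl _, rfl, ?_⟩
    have e1 : remove T₁ 𝒳 = none := by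
      rw [remove, restrict_eq_none_iff, h₁.2]
      simp
    have e2 : remove T₂ 𝒳 = none := by
      rw [remove, restrict_eq_none_iff, h₂.2]
      simp
    rw [e1, e2]
    trivial
  obtain ⟨X, hXsub, hXcard, hXiso⟩ := Nat.sInf_mem hne
  rw [hlab] at hXsub
  by_cases hcase : n ≤ dLR T₁ T₂ + (k - 1)
  · exact Or.inl hcase
  · right
    push_neg at hcase
    have hdlr : dLR T₁ T₂ = X.card := hXcard.symm
    have hklen : k ≤ (𝒳 \ X).card := by
      rw [Finset.card_sdiff_of_subset hXsub, hcard, ← hdlr]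
      omega
    obtain ⟨S, hSsub', hScard⟩ := Finset.exists_subset_card_eq hklen
    refine ⟨S, le_trans hSsub' (Finset.sdiff_subset), hScard, ?_⟩
    have hrem₁ : remove T₁ X = restrict T₁ (𝒳 \ X) := by rw [remove, h₁.2]
    have hrem₂ : remove T₂ X = restrict T₂ (𝒳 \ X) := by rw [remove, h₂.2]
    rw [hrem₁, hrem₂] at hXiso
    have := optIso_restrictO hXiso S
    rwa [restrictO_restrict, restrictO_restrict, Finset.inter_eq_right.2 hSsub'] at this

theorem pow_le_factorial_mul_exp (m : ℕ) :
    ((m : ℝ)) ^ m ≤ (m.factorial : ℝ) * Real.exp m := by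
  have h1 : (m:ℝ) ^ m / m.factorial ≤ Real.exp m := by
    have hsum := Real.sum_le_exp_of_nonneg (x := (m:ℝ)) (by positivity) (m + 1)
    refine le_trans ?_ hsum
    have hmem : m ∈ Finset.range (m + 1) := Finset.self_mem_range_succ m
    have := Finset.single_le_sum (f := fun i => (m:ℝ) ^ i / i.factorial)
      (fun i _ => by positivity) hmem
    simpa using this
  have hf : (0:ℝ) < m.factorial := by exact_mod_cast m.factorial_pos
  calc ((m:ℝ)) ^ m = ((m:ℝ) ^ m / m.factorial) * m.factorial := by field_simp
    _ ≤ Real.exp m * m.factorial := by gcongr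
    _ = (m.factorial : ℝ) * Real.exp m := by ring

theorem sqrt_tendsto_atTop : Filter.Tendsto Real.sqrt Filter.atTop Filter.atTop := by
  refine Filter.tendsto_atTop_atTop.2 fun b => ⟨(max b 0) ^ 2, fun x hx => ?_⟩
  have h0 : 0 ≤ max b 0 := le_max_right _ _
  have h1 : max b 0 ≤ Real.sqrt x := by
    rw [show max b 0 = Real.sqrt ((max b 0) ^ 2) from (Real.sqrt_sq h0).symm]
    exact Real.sqrt_le_sqrt hx
  exact le_trans (le_max_left b 0) h1

set_option maxHeartbeats 1000000 in
theorem analytic_bound (c : ℝ) (hc : Real.exp 1 / Real.sqrt 2 < c) :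
    ∃ n₀ : ℕ, ∀ n : ℕ, n₀ ≤ n → 1 ≤ n ∧ ∃ k : ℕ, 2 ≤ k ∧ k ≤ n ∧
      ((k : ℝ) - 1) + (n : ℝ) * (n.choose k) / (dodd k) ≤ c * Real.sqrt n := by
  have hsqrt2 : (0:ℝ) < Real.sqrt 2 := Real.sqrt_pos.2 (by norm_num)
  have he2 : (0:ℝ) < Real.exp 1 / Real.sqrt 2 := by positivity
  set c' : ℝ := (Real.exp 1 / Real.sqrt 2 + c) / 2 with hc'def
  have hc'lt : Real.exp 1 / Real.sqrt 2 < c' := by rw [hc'def]; linarith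
  have hc'c : c' < c := by rw [hc'def]; linarith
  have hc'pos : 0 < c' := lt_trans he2 hc'lt
  set ρ : ℝ := Real.exp 2 / (2 * c' ^ 2) with hρdef
  have hc'sq : Real.exp 2 < 2 * c' ^ 2 := by
    have h := hc'lt
    rw [div_lt_iff₀ hsqrt2] at h
    have hsq : (Real.sqrt 2) ^ 2 = 2 := Real.sq_sqrt (by norm_num)
    have hexp2 : Real.exp 2 = Real.exp 1 ^ 2 := by
      rw [← Real.exp_nat_mul]; norm_num
    rw [hexp2]
    nlinarith [Real.exp_pos 1]
  have hρpos : 0 < ρ := by rw [hρdef]; positivity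
  have hρlt : ρ < 1 := by
    rw [hρdef, div_lt_one (by positivity)]
    exact hc'sq
  have hlogρ : Real.log ρ < 0 := Real.log_neg hρpos hρlt
  set a : ℝ := -(Real.log ρ) * c' with hadef
  have hapos : 0 < a := by rw [hadef]; exact mul_pos (by linarith) hc'pos
  have htend : Filter.Tendsto (fun x : ℝ => x ^ 4 * Real.exp (-(a * x)))
      Filter.atTop (nhds 0) := by
    have h0 := Real.tendsto_pow_mul_exp_neg_atTop_nhds_zero 4
    have hax : Filter.Tendsto (fun x : ℝ => a * x) Filter.atTop Filter.atTop :=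
      Filter.Tendsto.const_mul_atTop hapos Filter.tendsto_id
    have hcomp := h0.comp hax
    have heq : (fun x : ℝ => x ^ 4 * Real.exp (-(a * x)))
        = fun x : ℝ => (a ^ 4)⁻¹ * ((a * x) ^ 4 * Real.exp (-(a * x))) := by
      funext x
      field_simp
    rw [heq]
    simpa using hcomp.const_mul ((a ^ 4)⁻¹)
  have hsqrtTend : Filter.Tendsto (fun n : ℕ => Real.sqrt n) Filter.atTop Filter.atTop :=
    sqrt_tendsto_atTop.comp tendsto_natCast_atTop_atTop
  have hdecay : ∀ᶠ n : ℕ in Filter.atTop,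
      (Real.sqrt n) ^ 4 * Real.exp (-(a * Real.sqrt n)) < 1 :=
    (htend.comp hsqrtTend).eventually_lt_const (by norm_num : (0:ℝ) < 1)
  have hbig1 : ∀ᶠ n : ℕ in Filter.atTop, c' + 2 ≤ Real.sqrt n :=
    hsqrtTend.eventually_ge_atTop _
  have hbig2 : ∀ᶠ n : ℕ in Filter.atTop, (1:ℝ) ≤ Real.sqrt n :=
    hsqrtTend.eventually_ge_atTop _
  have hbig3 : ∀ᶠ n : ℕ in Filter.atTop, 2 / (c - c') ≤ Real.sqrt n :=
    hsqrtTend.eventually_ge_atTop _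
  obtain ⟨n₀, hall⟩ := Filter.eventually_atTop.1
    ((hdecay.and (hbig1.and (hbig2.and hbig3))))
  refine ⟨n₀, fun n hn => ?_⟩
  obtain ⟨hs4, hs1, hs2, hs3⟩ := hall n hn
  set s : ℝ := Real.sqrt n with hsdef
  have hs0 : 0 ≤ s := Real.sqrt_nonneg _
  have hssq : s ^ 2 = n := Real.sq_sqrt (by positivity)
  have hn1 : 1 ≤ n := by
    by_contra h
    push_neg at h
    interval_cases n
    · simp [hsdef, Real.sqrt_zero] at hs2
      linarith
  set j : ℕ := ⌈c' * s⌉₊ with hjdef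
  have hj1 : 1 ≤ j := by
    have : (0:ℝ) < c' * s := mul_pos hc'pos (by nlinarith)
    rw [hjdef]
    exact_mod_cast Nat.lt_ceil.2 (by exact_mod_cast this)
  set k : ℕ := j + 1 with hkdef
  have hjge : c' * s ≤ (j:ℝ) := Nat.le_ceil _
  have hjle : (j:ℝ) ≤ c' * s + 1 := (Nat.ceil_lt_add_one (by positivity)).le
  have hkn : k ≤ n := by
    have hreal : ((k:ℕ):ℝ) ≤ (n:ℝ) := by
      push_cast [hkdef]
      calc (j:ℝ) + 1 ≤ c' * s + 2 := by linarith
        _ ≤ c' * s + 2 * s := by linarith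
        _ = (c' + 2) * s := by ring
        _ ≤ s * s := mul_le_mul_of_nonneg_right hs1 hs0
        _ = (n:ℝ) := by rw [← hssq]; ring
    exact_mod_cast hreal
  refine ⟨hn1, k, by omega, hkn, ?_⟩
  -- main numeric estimate
  have hDpos : (0:ℝ) < dodd k := by exact_mod_cast dodd_pos k
  have hch : (k.factorial:ℝ) * (n.choose k) ≤ (n:ℝ) ^ k := by
    have h := Nat.descFactorial_le_pow n k
    rw [Nat.descFactorial_eq_factorial_mul_choose] at h
    exact_mod_cast h
  have hdd : (dodd k : ℝ) * (2 ^ j * j.factorial) = ((2*j).factorial : ℝ) := by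
    exact_mod_cast dodd_factorial j
  have h2jpow : (2*(j:ℝ)) ^ (2*j) ≤ ((2*j).factorial:ℝ) * Real.exp 2 ^ j := by
    have h := pow_le_factorial_mul_exp (2*j)
    have he : Real.exp ((2*j : ℕ) : ℝ) = Real.exp 2 ^ j := by
      push_cast
      rw [mul_comm (2:ℝ) (j:ℝ), Real.exp_nat_mul]
    rw [he] at h
    calc (2*(j:ℝ)) ^ (2*j) = (((2*j : ℕ):ℝ)) ^ (2*j) := by push_cast; ring_nf
      _ ≤ ((2*j).factorial:ℝ) * Real.exp 2 ^ j := h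
  have hjsq : c' ^ 2 * (n:ℝ) ≤ (j:ℝ) ^ 2 := by
    have h1 : (0:ℝ) ≤ c' * s := by positivity
    have h2 : (c' * s) * (c' * s) ≤ (j:ℝ) * (j:ℝ) :=
      mul_le_mul hjge hjge h1 (le_trans h1 hjge)
    calc c' ^ 2 * (n:ℝ) = (c' * s) * (c' * s) := by rw [← hssq]; ring
      _ ≤ (j:ℝ) * (j:ℝ) := h2
      _ = (j:ℝ) ^ 2 := (sq (j:ℝ)).symm
  have hbase : 2 * (n:ℝ) * Real.exp 2 ≤ 4 * ρ * (j:ℝ) ^ 2 := by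
    have he1 : 4 * ρ * (j:ℝ) ^ 2 = 2 * Real.exp 2 * ((j:ℝ) ^ 2 / c' ^ 2) := by
      rw [hρdef]
      field_simp
      ring
    rw [he1]
    have hnle : (n:ℝ) ≤ (j:ℝ) ^ 2 / c' ^ 2 := (le_div_iff₀ (by positivity)).2 (by linarith)
    calc 2 * (n:ℝ) * Real.exp 2 = 2 * Real.exp 2 * (n:ℝ) := by ring
      _ ≤ 2 * Real.exp 2 * ((j:ℝ) ^ 2 / c' ^ 2) := by
          have h2e : (0:ℝ) ≤ 2 * Real.exp 2 := by positivity
          exact mul_le_mul_of_nonneg_left hnle h2e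
  have hstep1 : (n:ℝ) * (n.choose k) * (2 ^ j * j.factorial) ≤ (n:ℝ) ^ (k+1) * 2 ^ j := by
    have hjk : (j.factorial : ℝ) ≤ k.factorial := by
      exact_mod_cast Nat.factorial_le (by omega : j ≤ k)
    calc (n:ℝ) * (n.choose k) * (2 ^ j * j.factorial)
        ≤ (n:ℝ) * (n.choose k) * (2 ^ j * k.factorial) := by gcongr
      _ = ((k.factorial:ℝ) * (n.choose k)) * ((n:ℝ) * 2 ^ j) := by ring
      _ ≤ (n:ℝ) ^ k * ((n:ℝ) * 2 ^ j) := by gcongr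
      _ = (n:ℝ) ^ (k+1) * 2 ^ j := by rw [pow_succ]; ring
  have hstep2 : (n:ℝ) ^ (k+1) * 2 ^ j ≤ (n:ℝ) ^ 2 * ρ ^ j * (2*j).factorial := by
    have hfact_lb : ((4 * (j:ℝ) ^ 2) / Real.exp 2) ^ j ≤ ((2*j).factorial:ℝ) := by
      rw [div_pow, div_le_iff₀ (by positivity)]
      calc (4 * (j:ℝ) ^ 2) ^ j = (2*(j:ℝ)) ^ (2*j) := by
            rw [pow_mul]
            congr 1
            ring
        _ ≤ ((2*j).factorial:ℝ) * Real.exp 2 ^ j := h2jpow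
    have hbase2 : 2 * (n:ℝ) ≤ ρ * (4 * (j:ℝ) ^ 2) / Real.exp 2 := by
      rw [le_div_iff₀ (Real.exp_pos 2)]
      nlinarith
    calc (n:ℝ) ^ (k+1) * 2 ^ j = (n:ℝ) ^ 2 * (2 * (n:ℝ)) ^ j := by
          rw [hkdef, mul_pow]
          rw [show j + 1 + 1 = 2 + j by ring, pow_add]
          ring
      _ ≤ (n:ℝ) ^ 2 * (ρ * (4 * (j:ℝ) ^ 2) / Real.exp 2) ^ j := by
          gcongr
      _ = (n:ℝ) ^ 2 * (ρ ^ j * ((4 * (j:ℝ) ^ 2) / Real.exp 2) ^ j) := by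
          rw [mul_div_assoc, mul_pow]
      _ ≤ (n:ℝ) ^ 2 * (ρ ^ j * (2*j).factorial) := by
          gcongr
      _ = (n:ℝ) ^ 2 * ρ ^ j * (2*j).factorial := by ring
  have claim1 : (n:ℝ) * (n.choose k) / dodd k ≤ (n:ℝ) ^ 2 * ρ ^ j := by
    rw [div_le_iff₀ hDpos]
    have hkey := le_trans hstep1 hstep2
    have h6 : (n:ℝ) ^ 2 * ρ ^ j * (2*j).factorial
        = ((n:ℝ) ^ 2 * ρ ^ j * dodd k) * (2 ^ j * j.factorial) := by
      rw [← hdd]; ring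
    rw [h6] at hkey
    have hpos2 : (0:ℝ) < 2 ^ j * j.factorial := by
      have : (0:ℝ) < (j.factorial : ℝ) := by exact_mod_cast j.factorial_pos
      positivity
    exact le_of_mul_le_mul_right hkey hpos2
  -- decay step
  have hdecay2 : (n:ℝ) ^ 2 * ρ ^ j ≤ 1 := by
    have h1 : ρ ^ j = ρ ^ ((j:ℝ)) := (Real.rpow_natCast ρ j).symm
    have h2 : ρ ^ ((j:ℝ)) ≤ ρ ^ (c' * s) :=
      Real.rpow_le_rpow_of_exponent_ge hρpos hρlt.le hjge
    have h3 : ρ ^ (c' * s) = Real.exp (-(a * s)) := by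
      rw [Real.rpow_def_of_pos hρpos, hadef]
      congr 1
      ring
    have h4 : (n:ℝ) ^ 2 = s ^ 4 := by
      rw [← hssq]; ring
    calc (n:ℝ) ^ 2 * ρ ^ j ≤ (n:ℝ) ^ 2 * ρ ^ (c' * s) := by
          rw [h1]; gcongr
      _ = s ^ 4 * Real.exp (-(a * s)) := by rw [h4, h3]
      _ ≤ 1 := hs4.le
  -- conclude
  have hcs : c' * s + 2 ≤ c * s := by
    have : (c - c') * s ≥ 2 := by
      rw [ge_iff_le, ← div_le_iff₀' (by linarith : 0 < c - c')]
      exact hs3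
    linarith
  push_cast [hkdef]
  calc ((j:ℝ) + 1 - 1) + (n:ℝ) * (n.choose (j+1)) / dodd (j+1)
      ≤ (j:ℝ) + (n:ℝ) ^ 2 * ρ ^ j := by
        have := claim1
        rw [hkdef] at this
        push_cast at this ⊢
        linarith
    _ ≤ (c' * s + 1) + 1 := by linarith
    _ ≤ c * s := by linarith

theorem exists_tree_on : ∀ (m : ℕ) (𝒳 : Finset α), 𝒳.card = m → 𝒳.Nonempty →
    ∃ T, IsTreeOn T 𝒳 := by
  intro m
  induction m with
  | zero => intro 𝒳 hc hne; exact absurd (Finset.card_eq_zero.1 hc) hne.ne_empty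
  | succ m ih =>
      intro 𝒳 hc hne
      obtain ⟨x, hx⟩ := hne
      rcases Nat.eq_zero_or_pos m with hm | hm
      · subst hm
        obtain ⟨a, ha⟩ := Finset.card_eq_one.1 hc
        exact ⟨leaf a, trivial, by rw [ha]; rfl⟩
      · have hc' : (𝒳.erase x).card = m := by rw [Finset.card_erase_of_mem hx, hc]; rfl
        have hne' : (𝒳.erase x).Nonempty := Finset.card_pos.1 (hc' ▸ hm)
        obtain ⟨T', hT'⟩ := ih (𝒳.erase x) hc' hne'
        refine ⟨node (leaf x) T', ⟨trivial, hT'.1, ?_⟩, ?_⟩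
        · rw [show labels (leaf x) = {x} from rfl, hT'.2, Finset.disjoint_singleton_left]
          exact Finset.notMem_erase x 𝒳
        · rw [show labels (node (leaf x) T') = {x} ∪ labels T' from rfl, hT'.2,
            show ({x} : Finset α) ∪ 𝒳.erase x = insert x (𝒳.erase x) from
              (Finset.insert_eq x _).symm, Finset.insert_erase hx]

set_option maxHeartbeats 1000000 in
theorem main_statement :
    ∀ c : ℝ, Real.exp 1 / Real.sqrt 2 < c →
    ∃ n₀ : ℕ, ∀ n : ℕ, n₀ ≤ n →
      ∀ 𝒳 : Finset α, 𝒳.card = n →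
      ∀ F : Finset (LTree α), (∀ T, T ∈ F ↔ IsTreeOn T 𝒳) →
      (n : ℝ) - c * Real.sqrt n ≤
        (∑ T₁ ∈ F, ∑ T₂ ∈ F, (dLR T₁ T₂ : ℝ)) / (F.card : ℝ) ^ 2 := by
  intro c hc
  classical
  obtain ⟨n₀, hana⟩ := analytic_bound c hc
  refine ⟨n₀, fun n hn 𝒳 hcard F hF => ?_⟩
  obtain ⟨hn1, k, hk2, hkn, hineq⟩ := hana n hn
  have hk1 : 1 ≤ k := by omega
  have hXne : 𝒳.Nonempty := Finset.card_pos.1 (hcard ▸ hn1)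
  obtain ⟨T₀, hT₀⟩ := exists_tree_on 𝒳.card 𝒳 rfl hXne
  have hFne : F.Nonempty := ⟨T₀, (hF T₀).2 hT₀⟩
  have hM : (0:ℝ) < (F.card:ℝ) := by exact_mod_cast Finset.card_pos.2 hFne
  have hM2 : (0:ℝ) < ((F.card:ℝ))^2 := by positivity
  have hDr : (0:ℝ) < (dodd k : ℝ) := by exact_mod_cast dodd_pos k
  set E := (F ×ˢ F).filter (fun p : LTree α × LTree α =>
    ∃ S : Finset α, S ⊆ 𝒳 ∧ S.card = k ∧ OptIso (restrict p.1 S) (restrict p.2 S)) with hEdef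
  have hEbound : E.card * dodd k ≤ n.choose k * F.card ^ 2 := by
    have hsub : E ⊆ (𝒳.powersetCard k).biUnion (fun S => (F ×ˢ F).filter
        (fun p : LTree α × LTree α => OptIso (restrict p.1 S) (restrict p.2 S))) := by
      intro p hp
      obtain ⟨hmem, S, hS1, hS2, hS3⟩ := Finset.mem_filter.1 hp
      exact Finset.mem_biUnion.2 ⟨S, Finset.mem_powersetCard.2 ⟨hS1, hS2⟩,
        Finset.mem_filter.2 ⟨hmem, hS3⟩⟩
    calc E.card * dodd k
        ≤ (∑ S ∈ 𝒳.powersetCard k, ((F ×ˢ F).filter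
            (fun p : LTree α × LTree α => OptIso (restrict p.1 S) (restrict p.2 S))).card)
            * dodd k :=
          Nat.mul_le_mul_right _ (le_trans (Finset.card_le_card hsub) Finset.card_biUnion_le)
      _ = ∑ S ∈ 𝒳.powersetCard k, ((F ×ˢ F).filter
            (fun p : LTree α × LTree α => OptIso (restrict p.1 S) (restrict p.2 S))).card
            * dodd k := Finset.sum_mul _ _ _
      _ ≤ ∑ _S ∈ 𝒳.powersetCard k, F.card ^ 2 :=
          Finset.sum_le_sum fun S hS => agree_pairs_bound hcard hF
            (Finset.mem_powersetCard.1 hS).1 (Finset.mem_powersetCard.1 hS).2 hk1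
      _ = (𝒳.powersetCard k).card * F.card ^ 2 := by rw [Finset.sum_const, smul_eq_mul]
      _ = n.choose k * F.card ^ 2 := by rw [Finset.card_powersetCard, hcard]
  have hpair : ∀ T₁ ∈ F, ∀ T₂ ∈ F,
      (n:ℝ) - ((k:ℝ) - 1) - n * (if (T₁, T₂) ∈ E then (1:ℝ) else 0) ≤ (dLR T₁ T₂ : ℝ) := by
    intro T₁ h₁ T₂ h₂
    rcases dLR_dichotomy (k := k) ((hF T₁).1 h₁) ((hF T₂).1 h₂) hcard
      with hle | ⟨S, hSs, hSc, hSi⟩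
    · have h0 : (0:ℝ) ≤ (n:ℝ) * (if (T₁,T₂) ∈ E then (1:ℝ) else 0) := by positivity
      have hle' : n + 1 ≤ dLR T₁ T₂ + k := by omega
      have hcast : (n:ℝ) + 1 ≤ (dLR T₁ T₂ : ℝ) + k := by exact_mod_cast hle'
      linarith
    · have hmem : (T₁, T₂) ∈ E := Finset.mem_filter.2
        ⟨Finset.mem_product.2 ⟨h₁, h₂⟩, S, hSs, hSc, hSi⟩
      rw [if_pos hmem]
      have hd0 : (0:ℝ) ≤ (dLR T₁ T₂ : ℝ) := by positivity
      have hk1r : (1:ℝ) ≤ (k:ℝ) := by exact_mod_cast hk1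
      linarith
  have hind : ∑ p ∈ F ×ˢ F, (if p ∈ E then (1:ℝ) else 0) = E.card := by
    rw [Finset.sum_ite_mem, Finset.inter_eq_right.2 (Finset.filter_subset _ _),
      Finset.sum_const, nsmul_eq_mul, mul_one]
  have hsum : ((F.card:ℝ))^2 * ((n:ℝ) - ((k:ℝ)-1)) - n * E.card
      ≤ ∑ T₁ ∈ F, ∑ T₂ ∈ F, (dLR T₁ T₂ : ℝ) := by
    have h1 : ∑ p ∈ F ×ˢ F, ((n:ℝ) - ((k:ℝ)-1) - n * (if p ∈ E then (1:ℝ) else 0))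
        ≤ ∑ p ∈ F ×ˢ F, (dLR p.1 p.2 : ℝ) :=
      Finset.sum_le_sum fun p hp => by
        obtain ⟨h₁, h₂⟩ := Finset.mem_product.1 hp
        exact hpair p.1 h₁ p.2 h₂
    have hLHS : ∑ p ∈ F ×ˢ F, ((n:ℝ) - ((k:ℝ)-1) - n * (if p ∈ E then (1:ℝ) else 0))
        = ((F.card:ℝ))^2 * ((n:ℝ) - ((k:ℝ)-1)) - n * E.card := by
      rw [Finset.sum_sub_distrib, Finset.sum_const, ← Finset.mul_sum, hind,
        Finset.card_product, nsmul_eq_mul]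
      push_cast
      ring
    have hRHS : ∑ p ∈ F ×ˢ F, (dLR p.1 p.2 : ℝ) = ∑ T₁ ∈ F, ∑ T₂ ∈ F, (dLR T₁ T₂ : ℝ) :=
      Finset.sum_product _ _ _
    rw [hLHS, hRHS] at h1
    exact h1
  rw [le_div_iff₀ hM2]
  have hEr : (E.card:ℝ) ≤ (n.choose k : ℝ) * (F.card:ℝ)^2 / dodd k := by
    rw [le_div_iff₀ hDr]
    exact_mod_cast hEbound
  have h2 : (n:ℝ) - c * Real.sqrt n
      ≤ (n:ℝ) - ((k:ℝ)-1) - (n:ℝ) * (n.choose k) / dodd k := by linarith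
  calc ((n:ℝ) - c * Real.sqrt n) * (F.card:ℝ)^2
      ≤ ((n:ℝ) - ((k:ℝ)-1) - (n:ℝ) * (n.choose k) / dodd k) * (F.card:ℝ)^2 :=
        mul_le_mul_of_nonneg_right h2 hM2.le
    _ = ((F.card:ℝ))^2 * ((n:ℝ) - ((k:ℝ)-1))
        - (n:ℝ) * ((n.choose k : ℝ) * (F.card:ℝ)^2 / dodd k) := by ring
    _ ≤ ((F.card:ℝ))^2 * ((n:ℝ) - ((k:ℝ)-1)) - n * E.card := by
        have := mul_le_mul_of_nonneg_left hEr (by positivity : (0:ℝ) ≤ (n:ℝ))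
        linarith
    _ ≤ ∑ T₁ ∈ F, ∑ T₂ ∈ F, (dLR T₁ T₂ : ℝ) := hsum

end LTree

open LTree

/-- Theorem 3 of the paper, from Bryant–McKenzie–Steel.  For any
constant `c > e/√2` there is `n₀` such that for all `n ≥ n₀`, if `T₁` and `T₂` are
chosen uniformly and independently from the trees on a label set of size `n`, then
`E[d_LR(T₁,T₂)] ≥ n − c√n`.  The expectation is written as the average of
`d_LR(T₁,T₂)` over all ordered pairs of trees on `𝒳`. -/
theorem expected_dLR_lower_bound {α : Type u} [DecidableEq α] :
    ∀ c : ℝ, Real.exp 1 / Real.sqrt 2 < c →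
    ∃ n₀ : ℕ, ∀ n : ℕ, n₀ ≤ n →
      ∀ 𝒳 : Finset α, 𝒳.card = n →
      ∀ F : Finset (LTree α), (∀ T, T ∈ F ↔ IsTreeOn T 𝒳) →
      (n : ℝ) - c * Real.sqrt n ≤
        (∑ T₁ ∈ F, ∑ T₂ ∈ F, (dLR T₁ T₂ : ℝ)) / (F.card : ℝ) ^ 2 :=
  main_statement
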